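/- Let q be an odd prime with q ≥ d+1, d odd, n = q^ℓ − 1, and α a primitive element of F_{q^ℓ}. Map φ: F_2×F_2 → {0,1,2,3} by (0;0)↦0, (0;1)↦1, (1;0)↦2, (1;1)↦3. For u ∈ Z_d and z ∈ F_{q^ℓ}^{⌊d/2⌋}, the code C_N(n,u,z) = {(a;b) : Σ_i φ(a_i;b_i) ≡ u (mod d), and Σ_i φ(a_i;b_i)·α^{ik} = z_k for k = 1,...,⌊d/2⌋} has minimum asymmetric Lee distance (λ=1) at least d. -/

import Mathlib

open Finset

def ind (p : Prop) [Decidable p] : ℤ := if p then 1 else 0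

def aldSym (lam : ℕ) (a b c d : Bool) : ℤ :=
  (1 + lam) * (ind (a = b) + ind (c = d))
    + lam * ind (a = !b ∧ !b = !c ∧ !c = d)
    - 2 * (1 + lam) * ind (a = b ∧ b = c ∧ c = d)

def ALD (lam n : ℕ) (x y : (Fin n → Bool) × (Fin n → Bool)) : ℤ :=
  ∑ i, aldSym lam (x.1 i) (x.2 i) (y.1 i) (y.2 i)

def wt {n : ℕ} (a b : Fin n → Bool) : ℕ :=
  (Finset.univ.filter fun i => a i ≠ b i).card
def phi (a b : Bool) : ℕ := (if a then 2 else 0) + (if b then 1 else 0)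

/-! ### Auxiliary lemmas -/

lemma phi_inj : ∀ a b c d : Bool, phi a b = phi c d → a = c ∧ b = d := by decide

lemma ald_ge_abs : ∀ a b c d : Bool,
    |(phi a b : ℤ) - (phi c d : ℤ)| ≤ aldSym 1 a b c d := by decide

noncomputable def msum {F : Type} [Field F] (A : Multiset F) (k : ℕ) : F := (A.map (· ^ k)).sum

lemma newton_eval {F : Type} [Field F] {σ : Type} [Fintype σ] (f : σ → F) (k : ℕ) :
    (k : F) * (Finset.univ.val.map f).esymm k =
      (-1) ^ (k + 1) * ∑ a ∈ Finset.HasAntidiagonal.antidiagonal k with a.1 < k,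
        (-1) ^ a.1 * (Finset.univ.val.map f).esymm a.1 * msum (Finset.univ.val.map f) a.2 := by
  have h := congrArg (MvPolynomial.aeval f) (MvPolynomial.mul_esymm_eq_sum σ F k)
  have hps : ∀ m, MvPolynomial.aeval f (MvPolynomial.psum σ F m)
      = msum (Finset.univ.val.map f) m := by
    intro m
    simp only [MvPolynomial.psum, map_sum, map_pow, MvPolynomial.aeval_X, msum,
      Multiset.map_map, Function.comp]
    rfl
  simpa only [map_mul, map_sum, map_pow, map_neg, map_one, map_natCast,
    MvPolynomial.aeval_esymm_eq_multiset_esymm, hps] using h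

lemma newton_multiset {F : Type} [Field F] (A : Multiset F) (k : ℕ) :
    (k : F) * A.esymm k =
      (-1) ^ (k + 1) * ∑ a ∈ Finset.HasAntidiagonal.antidiagonal k with a.1 < k,
        (-1) ^ a.1 * A.esymm a.1 * msum A a.2 := by
  have key : (Finset.univ.val.map A.toList.get : Multiset F) = A := by
    rw [Fin.univ_val_map, List.ofFn_get, Multiset.coe_toList]
  have h := newton_eval (A.toList.get) k
  rwa [key] at h

open Polynomial in
lemma multiset_eq_of_powersums {F : Type} [Field F] {q : ℕ} [CharP F q] (N : ℕ) (hN : N < q)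
    (A B : Multiset F) (hA : Multiset.card A = N) (hB : Multiset.card B = N)
    (hp : ∀ k, 1 ≤ k → k ≤ N → msum A k = msum B k) : A = B := by
  have hes : ∀ k, k ≤ N → A.esymm k = B.esymm k := by
    intro k
    induction k using Nat.strong_induction_on with
    | _ k ih =>
      intro hk
      match k, hk with
      | 0, _ => simp [Multiset.esymm]
      | (m+1), hk =>
        have h1 := newton_multiset A (m+1)
        have h2 := newton_multiset B (m+1)
        have heq : ∑ a ∈ Finset.HasAntidiagonal.antidiagonal (m+1) with a.1 < m+1,
            (-1 : F) ^ a.1 * A.esymm a.1 * msum A a.2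
            = ∑ a ∈ Finset.HasAntidiagonal.antidiagonal (m+1) with a.1 < m+1,
            (-1 : F) ^ a.1 * B.esymm a.1 * msum B a.2 := by
          apply Finset.sum_congr rfl
          intro a ha
          simp only [Finset.mem_filter, Finset.HasAntidiagonal.mem_antidiagonal] at ha
          have h2' : 1 ≤ a.2 ∧ a.2 ≤ N := by omega
          rw [ih a.1 ha.2 (by omega), hp a.2 h2'.1 h2'.2]
        have hk0 : ((m+1 : ℕ) : F) ≠ 0 := by
          rw [Ne, CharP.cast_eq_zero_iff F q]
          intro hdvd
          have := Nat.le_of_dvd (Nat.succ_pos m) hdvd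
          omega
        exact mul_left_cancel₀ hk0 (h1.trans (heq ▸ h2.symm))
  have hprod : (A.map fun a => X - C a).prod = (B.map fun a => X - C a).prod := by
    have hrw : ∀ S : Multiset F,
        (S.map fun a => X - C a).prod = ((S.map Neg.neg).map fun r => X + C r).prod := by
      intro S
      rw [Multiset.map_map]
      apply congrArg
      apply Multiset.map_congr rfl
      intro a _
      simp [sub_eq_add_neg]
    rw [hrw A, hrw B, Multiset.prod_X_add_C_eq_sum_esymm, Multiset.prod_X_add_C_eq_sum_esymm,
      Multiset.card_map, Multiset.card_map, hA, hB]
    apply Finset.sum_congr rfl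
    intro j hj
    rw [Multiset.esymm_neg, Multiset.esymm_neg, hes j (Nat.lt_succ_iff.mp (Finset.mem_range.mp hj))]
  have hroots := congrArg Polynomial.roots hprod
  rwa [Polynomial.roots_multiset_prod_X_sub_C, Polynomial.roots_multiset_prod_X_sub_C] at hroots

lemma msum_bind {F : Type} [Field F] {n : ℕ} (w : Fin n → ℕ) (β : Fin n → F) (k : ℕ) :
    msum ((Finset.univ.val : Multiset (Fin n)).bind fun i => Multiset.replicate (w i) (β i)) k
      = ∑ i, (w i : F) * β i ^ k := by
  rw [msum, Multiset.map_bind]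
  rw [Multiset.sum_bind]
  simp only [Multiset.map_replicate, Multiset.sum_replicate, nsmul_eq_mul]
  rfl

lemma card_bind_repl {F : Type} [Field F] {n : ℕ} (w : Fin n → ℕ) (β : Fin n → F) :
    Multiset.card ((Finset.univ.val : Multiset (Fin n)).bind
      fun i => Multiset.replicate (w i) (β i)) = ∑ i, w i := by
  rw [Multiset.card_bind]
  simp only [Function.comp, Multiset.card_replicate]
  rfl

lemma count_bind_repl {F : Type} [Field F] [DecidableEq F] {n : ℕ} (w : Fin n → ℕ) (β : Fin n → F)
    (hβ : Function.Injective β) (i : Fin n) :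
    Multiset.count (β i) ((Finset.univ.val : Multiset (Fin n)).bind
      fun j => Multiset.replicate (w j) (β j)) = w i := by
  rw [Multiset.count_bind]
  have : Multiset.sum ((Finset.univ.val : Multiset (Fin n)).map
      fun j => Multiset.count (β i) (Multiset.replicate (w j) (β j)))
      = ∑ j, Multiset.count (β i) (Multiset.replicate (w j) (β j)) := rfl
  rw [this]
  rw [Finset.sum_eq_single_of_mem i (Finset.mem_univ i)]
  · simp [Multiset.count_replicate]
  · intro j _ hji
    rw [Multiset.count_replicate, if_neg (fun h => hji (hβ h))]

theorem bch_like_code_ald_ge_d (q l d : ℕ) (hq : q.Prime) (hqodd : Odd q)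
    (hqd : d + 1 ≤ q) (hdodd : Odd d) (hl : 0 < l)
    (n : ℕ) (hn : n = q ^ l - 1)
    (F : Type) [Field F] [Fintype F] (hF : Fintype.card F = q ^ l)
    (α : F) (hα : orderOf α = q ^ l - 1)
    (u : ℕ) (hu : u < d) (z : Fin (d / 2) → F)
    (x y : (Fin n → Bool) × (Fin n → Bool))
    (hx1 : (∑ i, phi (x.1 i) (x.2 i)) % d = u)
    (hx2 : ∀ k : Fin (d / 2),
      ∑ i : Fin n, (phi (x.1 i) (x.2 i) : F) * α ^ (((i : ℕ) + 1) * ((k : ℕ) + 1)) = z k)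
    (hy1 : (∑ i, phi (y.1 i) (y.2 i)) % d = u)
    (hy2 : ∀ k : Fin (d / 2),
      ∑ i : Fin n, (phi (y.1 i) (y.2 i) : F) * α ^ (((i : ℕ) + 1) * ((k : ℕ) + 1)) = z k)
    (hxy : x ≠ y) :
    (d : ℤ) ≤ ALD 1 n x y := by
  classical
  by_contra hlt
  push_neg at hlt
  have hd1 : 1 ≤ d := hdodd.pos
  have hq2 : 2 ≤ q := hq.two_le
  -- characteristic of F is q
  have hcharq : CharP F q := by
    have hc : CharP F (ringChar F) := ringChar.charP F
    obtain ⟨m, hpm, hcard⟩ := FiniteField.card F (ringChar F)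
    have hql : q ∣ ringChar F ^ (m : ℕ) := by
      rw [← hcard, hF]
      exact dvd_pow_self q hl.ne'
    have : q = ringChar F := by
      have := hq.dvd_of_dvd_pow hql
      exact ((Nat.prime_dvd_prime_iff_eq hq hpm).mp this)
    rwa [this]
  -- the error vector
  set e : Fin n → ℤ := fun i => (phi (x.1 i) (x.2 i) : ℤ) - (phi (y.1 i) (y.2 i) : ℤ) with he
  have habs : ∑ i, |e i| ≤ ALD 1 n x y := by
    apply Finset.sum_le_sum
    intro i _
    exact ald_ge_abs _ _ _ _
  have habsd : ∑ i, |e i| < (d : ℤ) := lt_of_le_of_lt habs hlt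
  have hdvd : (d : ℤ) ∣ ∑ i, e i := by
    have hsplit : ∑ i, e i
        = ((∑ i, phi (x.1 i) (x.2 i) : ℕ) : ℤ) - ((∑ i, phi (y.1 i) (y.2 i) : ℕ) : ℤ) := by
      push_cast
      rw [← Finset.sum_sub_distrib]
    rw [hsplit]
    have hmod : (∑ i, phi (y.1 i) (y.2 i)) ≡ (∑ i, phi (x.1 i) (x.2 i)) [MOD d] := by
      unfold Nat.ModEq
      rw [hx1, hy1]
    exact (Nat.modEq_iff_dvd.mp hmod)
  have hsum0 : ∑ i, e i = 0 := by
    rcases hdvd with ⟨c, hc⟩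
    have h1 : |∑ i, e i| ≤ ∑ i, |e i| := Finset.abs_sum_le_sum_abs _ _
    have h2 : |(d : ℤ) * c| < d := by rw [← hc]; exact lt_of_le_of_lt h1 habsd
    rw [abs_mul, abs_of_nonneg (by positivity : (0:ℤ) ≤ (d:ℤ))] at h2
    have hc0 : c = 0 := by
      by_contra hc0
      have : 1 ≤ |c| := Int.one_le_abs (by simpa using hc0)
      nlinarith [Int.natCast_pos.mpr (by omega : 0 < d)]
    rw [hc, hc0, mul_zero]
  -- positive and negative parts
  set ep : Fin n → ℕ := fun i => (e i).toNat with hep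
  set en : Fin n → ℕ := fun i => (-(e i)).toNat with hen
  have hepen : ∀ i, ((ep i : ℤ)) - en i = e i := by intro i; simp only [hep, hen]; omega
  have habsi : ∀ i, ((ep i : ℤ)) + en i = |e i| := by
    intro i
    rcases le_or_gt 0 (e i) with h | h
    · rw [abs_of_nonneg h]; simp only [hep, hen]; omega
    · rw [abs_of_neg h]; simp only [hep, hen]; omega
  have hNsum : (∑ i, ep i : ℤ) - (∑ i, en i : ℤ) = 0 := by
    push_cast
    rw [← Finset.sum_sub_distrib]
    rw [Finset.sum_congr rfl (fun i _ => hepen i)]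
    exact hsum0
  have hNeq : ∑ i, ep i = ∑ i, en i := by exact_mod_cast sub_eq_zero.mp hNsum
  set N : ℕ := ∑ i, ep i with hN
  have hNabs : (N : ℤ) + N < d := by
    have h1 : (N : ℤ) = ∑ i, (ep i : ℤ) := by rw [hN]; push_cast; rfl
    have h2 : (N : ℤ) = ∑ i, (en i : ℤ) := by rw [hNeq]; push_cast; rfl
    have h3 : (N : ℤ) + N = ∑ i, |e i| := by
      nth_rewrite 1 [h1]
      nth_rewrite 1 [h2]
      rw [← Finset.sum_add_distrib]
      exact Finset.sum_congr rfl (fun i _ => habsi i)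
    rw [h3]
    exact habsd
  have hNd : 2 * N < d := by exact_mod_cast (by push_cast; linarith : ((2 * N : ℕ) : ℤ) < d)
  have hNd2 : N ≤ d / 2 := by omega
  have hNq : N < q := by omega
  -- α is injective on exponents 1..n
  have hn0 : 1 ≤ q ^ l - 1 := by
    have : q ≤ q ^ l := Nat.le_self_pow hl.ne' q
    omega
  have hpow1 : α ^ (q ^ l - 1) = 1 := by rw [← hα]; exact pow_orderOf_eq_one α
  have hα0 : α ≠ 0 := by
    intro h
    rw [h, zero_pow (by omega)] at hpow1
    exact zero_ne_one hpow1
  set β : Fin n → F := fun i => α ^ ((i : ℕ) + 1) with hβ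
  have hβinj : Function.Injective β := by
    have key : ∀ a b : ℕ, a ≤ b → b - a < q ^ l - 1 → α ^ a = α ^ b → a = b := by
      intro a b hab hlt' hpow
      have hsplit : α ^ a * α ^ (b - a) = α ^ b := by
        rw [← pow_add]
        congr 1
        omega
      have : α ^ a * α ^ (b - a) = α ^ a * 1 := by
        rw [mul_one, hsplit, ← hpow]
      have h1 : α ^ (b - a) = 1 := mul_left_cancel₀ (pow_ne_zero a hα0) this
      have h2 : orderOf α ∣ b - a := orderOf_dvd_of_pow_eq_one h1
      rw [hα] at h2
      have := Nat.eq_zero_of_dvd_of_lt h2 hlt'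
      omega
    intro i j hij
    simp only [hβ] at hij
    rcases le_total ((i : ℕ) + 1) ((j : ℕ) + 1) with h | h
    · have := key _ _ h (by have := j.isLt; omega) hij
      exact Fin.ext (by omega)
    · have := key _ _ h (by have := i.isLt; omega) hij.symm
      exact Fin.ext (by omega)
  -- the multisets
  set A : Multiset F := (Finset.univ.val : Multiset (Fin n)).bind
    (fun i => Multiset.replicate (ep i) (β i)) with hA
  set B : Multiset F := (Finset.univ.val : Multiset (Fin n)).bind
    (fun i => Multiset.replicate (en i) (β i)) with hB
  have hAB : A = B := by
    apply multiset_eq_of_powersums (q := q) N hNq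
    · rw [hA, card_bind_repl]
    · rw [hB, card_bind_repl, ← hNeq]
    · intro k hk1 hkN
      rw [hA, hB, msum_bind, msum_bind]
      have hkd : k - 1 < d / 2 := by omega
      have hx2' := hx2 ⟨k - 1, hkd⟩
      have hy2' := hy2 ⟨k - 1, hkd⟩
      simp only at hx2' hy2'
      have hkk : k - 1 + 1 = k := by omega
      rw [hkk] at hx2' hy2'
      have hzero : ∑ i : Fin n, (((e i : ℤ)) : F) * β i ^ k = 0 := by
        have : ∀ i : Fin n, (((e i : ℤ)) : F) * β i ^ k
            = (phi (x.1 i) (x.2 i) : F) * α ^ (((i : ℕ) + 1) * k)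
              - (phi (y.1 i) (y.2 i) : F) * α ^ (((i : ℕ) + 1) * k) := by
          intro i
          rw [hβ, ← pow_mul]
          push_cast [he]
          ring
        rw [Finset.sum_congr rfl (fun i _ => this i), Finset.sum_sub_distrib, hx2', hy2',
          sub_self]
      have : ∀ i : Fin n, (ep i : F) * β i ^ k - (en i : F) * β i ^ k
          = (((e i : ℤ)) : F) * β i ^ k := by
        intro i
        rw [← sub_mul]
        congr 1
        rw [← hepen i]
        push_cast
        ring
      have hsub : (∑ i, (ep i : F) * β i ^ k) - (∑ i, (en i : F) * β i ^ k) = 0 := by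
        rw [← Finset.sum_sub_distrib, Finset.sum_congr rfl (fun i _ => this i), hzero]
      exact sub_eq_zero.mp hsub
  -- conclude e = 0
  have hei : ∀ i, e i = 0 := by
    intro i
    have h1 : Multiset.count (β i) A = ep i := count_bind_repl ep β hβinj i
    have h2 : Multiset.count (β i) B = en i := count_bind_repl en β hβinj i
    have : ep i = en i := by rw [← h1, ← h2, hAB]
    have := hepen i
    omega
  apply hxy
  have hcomp : ∀ i, x.1 i = y.1 i ∧ x.2 i = y.2 i := by
    intro i
    have hphi : phi (x.1 i) (x.2 i) = phi (y.1 i) (y.2 i) := by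
      have h0 := hei i
      rw [he] at h0
      have h1 : (phi (x.1 i) (x.2 i) : ℤ) = (phi (y.1 i) (y.2 i) : ℤ) := by
        simpa [sub_eq_zero] using h0
      exact_mod_cast h1
    exact phi_inj _ _ _ _ hphi
  exact Prod.ext_iff.mpr ⟨funext fun i => (hcomp i).1, funext fun i => (hcomp i).2⟩
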